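/- The expected number of graph queries performed by one call to SampleNode is less than 2/(1-α), and the probability that m independent calls to SampleNode jointly perform more than 2(1+Δ)m/(1-α) queries is less than exp(-(m/2)·Δ²/(1+Δ)). -/

import Mathlib

open MeasureTheory ProbabilityTheory

open scoped ENNReal NNReal


lemma lemA {u : ℝ} (h0 : 0 ≤ u) (h1 : u < 1) : u + u^2/2 ≤ -Real.log (1-u) := by
  have key : MonotoneOn (fun x : ℝ => -Real.log (1-x) - x - x^2/2) (Set.Ico 0 1) := by
    have hD : Convex ℝ (Set.Ico (0:ℝ) 1) := convex_Ico 0 1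
    have hderiv : ∀ x ∈ Set.Ioo (0:ℝ) 1,
        HasDerivAt (fun x : ℝ => -Real.log (1-x) - x - x^2/2) (x^2/(1-x)) x := by
      intro x hx
      have hne : (1:ℝ) - x ≠ 0 := by nlinarith [hx.2]
      have h1' : HasDerivAt (fun x : ℝ => 1 - x) (-1) x := by
        simpa using (hasDerivAt_id x).const_sub 1
      have hlog : HasDerivAt (fun x : ℝ => Real.log (1-x)) (-1/(1-x)) x := h1'.log hne
      have := ((hlog.neg.sub (hasDerivAt_id x)).sub
        (((hasDerivAt_id x).pow 2).div_const 2))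
      refine this.congr_deriv ?_
      simp only [id, Pi.pow_apply]
      field_simp
      ring
    apply monotoneOn_of_deriv_nonneg hD
    · apply ContinuousOn.sub
      apply ContinuousOn.sub
      · apply ContinuousOn.neg
        apply ContinuousOn.log (by fun_prop)
        intro x hx
        simp only [Set.mem_Ico] at hx; nlinarith [hx.2]
      · fun_prop
      · fun_prop
    · intro x hx
      rw [interior_Ico] at hx
      exact (hderiv x hx).differentiableAt.differentiableWithinAt
    · intro x hx
      rw [interior_Ico] at hx
      rw [(hderiv x hx).deriv]
      have : (0:ℝ) < 1 - x := by linarith [hx.2]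
      positivity
  have h := key (Set.mem_Ico.mpr ⟨le_refl 0, one_pos⟩) (Set.mem_Ico.mpr ⟨h0, h1⟩) h0
  simp only [Real.log_one, sub_zero] at h
  norm_num at h
  linarith

lemma lemB {d : ℝ} (h0 : 0 ≤ d) (h1 : d < 1) : -d - d^2/(2*(1-d)) ≤ Real.log (1-d) := by
  have key : MonotoneOn (fun x : ℝ => x + x^2/(2*(1-x)) + Real.log (1-x)) (Set.Ico 0 1) := by
    have hD : Convex ℝ (Set.Ico (0:ℝ) 1) := convex_Ico 0 1
    have hderiv : ∀ x ∈ Set.Ioo (0:ℝ) 1,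
        HasDerivAt (fun x : ℝ => x + x^2/(2*(1-x)) + Real.log (1-x)) (x^2/(2*(1-x)^2)) x := by
      intro x hx
      have hne : (1:ℝ) - x ≠ 0 := by nlinarith [hx.2]
      have hne2 : (2:ℝ) * (1-x) ≠ 0 := by simpa using hne
      have h1' : HasDerivAt (fun x : ℝ => 1 - x) (-1) x := by
        simpa using (hasDerivAt_id x).const_sub 1
      have hlog : HasDerivAt (fun x : ℝ => Real.log (1-x)) (-1/(1-x)) x := h1'.log hne
      have hden : HasDerivAt (fun x : ℝ => 2*(1-x)) (-2) x := by
        simpa using h1'.const_mul 2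
      have hfrac : HasDerivAt (fun x : ℝ => x^2/(2*(1-x)))
          ((2*x*(2*(1-x)) - x^2*(-2))/(2*(1-x))^2) x := by
        have := (((hasDerivAt_id x).pow 2).div hden hne2)
        simp only [id] at this
        refine this.congr_deriv ?_
        simp only [id, Pi.pow_apply]
        ring
      have := ((hasDerivAt_id x).add hfrac).add hlog
      refine this.congr_deriv ?_
      field_simp
      ring
    apply monotoneOn_of_deriv_nonneg hD
    · apply ContinuousOn.add
      apply ContinuousOn.add
      · fun_prop
      · apply ContinuousOn.div (by fun_prop) (by fun_prop)
        intro x hx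
        simp only [Set.mem_Ico] at hx; nlinarith [hx.2]
      · apply ContinuousOn.log (by fun_prop)
        intro x hx
        simp only [Set.mem_Ico] at hx; nlinarith [hx.2]
    · intro x hx
      rw [interior_Ico] at hx
      exact (hderiv x hx).differentiableAt.differentiableWithinAt
    · intro x hx
      rw [interior_Ico] at hx
      rw [(hderiv x hx).deriv]
      have : (0:ℝ) < 1 - x := by linarith [hx.2]
      positivity
  have h := key (Set.mem_Ico.mpr ⟨le_refl 0, one_pos⟩) (Set.mem_Ico.mpr ⟨h0, h1⟩) h0
  simp only [Real.log_one] at h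
  norm_num at h
  linarith


lemma key' {p D : ℝ} (hp0 : 0 < p) (hp1 : p < 1) (hD : 0 < D) :
    D^2/(2*(1+D)) ≤ Real.log ((1+D-p)/((1-p)*(1+D))) * ((1+D-p)/p) - Real.log (1+D) := by
  have hD1 : (0:ℝ) < 1 + D := by linarith
  have hDp : (0:ℝ) < 1 + D - p := by linarith
  have h1p : (0:ℝ) < 1 - p := by linarith
  set d : ℝ := D/(1+D) with hd
  set u : ℝ := p*D/(1+D-p) with hu
  have hd0 : 0 < d := div_pos hD hD1
  have hd1 : d < 1 := by rw [hd, div_lt_one hD1]; linarith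
  have hu0 : 0 < u := div_pos (by positivity) hDp
  have h1u : 1 - u = (1-p)*(1+D)/(1+D-p) := by
    rw [hu]; field_simp; ring
  have hu1 : u < 1 := by
    have : (0:ℝ) < (1-p)*(1+D)/(1+D-p) := by positivity
    linarith [h1u]
  have hlogR : Real.log ((1+D-p)/((1-p)*(1+D))) = -Real.log (1-u) := by
    rw [h1u, ← Real.log_inv]
    congr 1
    rw [inv_div]
  have hlogD : Real.log (1+D) = -Real.log (1-d) := by
    have h1d : 1 - d = (1+D)⁻¹ := by rw [hd]; field_simp; ring
    rw [h1d, Real.log_inv, neg_neg]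
  rw [hlogR, hlogD]
  have hC : (0:ℝ) < (1+D-p)/p := div_pos hDp hp0
  have hA := lemA hu0.le hu1
  have hB := lemB hd0.le hd1
  have h3 : (u + u^2/2) * ((1+D-p)/p) ≤ (-Real.log (1-u)) * ((1+D-p)/p) :=
    mul_le_mul_of_nonneg_right hA hC.le
  have e1 : (u + u^2/2) * ((1+D-p)/p) = D + p*D^2/(2*(1+D-p)) := by
    rw [hu]; field_simp
  have e2 : -d - d^2/(2*(1-d)) = -(D/(1+D)) - D^2/(2*(1+D)) := by
    have h1d : 1 - d = (1+D)⁻¹ := by rw [hd]; field_simp; ring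
    rw [hd, h1d]; field_simp
  have e4 : D - D/(1+D) = D^2/(1+D) := by field_simp; ring
  have e5 : (0:ℝ) < p*D^2/(2*(1+D-p)) := by positivity
  have e6 : D^2/(1+D) - D^2/(2*(1+D)) = D^2/(2*(1+D)) := by field_simp; ring
  linarith [h3, e1 ▸ h3, hB, e2 ▸ hB]

section Geom
variable {Ω : Type*} [MeasurableSpace Ω] (μ : Measure Ω) [IsProbabilityMeasure μ]
  {X : Ω → ℕ} {α : ℝ}

lemma geom_pmf_zero (hX : Measurable X)
    (hg : ∀ t : ℕ, μ {ω | t < X ω} = ENNReal.ofReal (α ^ t)) :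
    μ {ω | X ω = 0} = 0 := by
  have h : {ω | X ω = 0} = {ω | 0 < X ω}ᶜ := by
    ext ω; simp [Nat.pos_iff_ne_zero]
  have hms : MeasurableSet {ω | 0 < X ω} := hX MeasurableSet.of_discrete
  rw [h, measure_compl hms (measure_ne_top μ _), hg 0]
  simp

lemma geom_pmf_succ (hX : Measurable X) (hα0 : 0 ≤ α)
    (hg : ∀ t : ℕ, μ {ω | t < X ω} = ENNReal.ofReal (α ^ t)) (k : ℕ) :
    μ {ω | X ω = k + 1} = ENNReal.ofReal (α ^ k * (1 - α)) := by
  have h : {ω | X ω = k + 1} = {ω | k < X ω} \ {ω | k + 1 < X ω} := by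
    ext ω; simp only [Set.mem_setOf_eq, Set.mem_diff]; omega
  have hms : MeasurableSet {ω | k + 1 < X ω} := hX MeasurableSet.of_discrete
  have hsub : {ω | k + 1 < X ω} ⊆ {ω | k < X ω} := by
    intro ω hω; simp only [Set.mem_setOf_eq] at *; omega
  rw [h, measure_diff hsub hms.nullMeasurableSet (measure_ne_top μ _), hg k, hg (k+1),
    ← ENNReal.ofReal_sub _ (pow_nonneg hα0 (k+1))]
  congr 1
  ring

lemma geom_lintegral (hX : Measurable X) (hα0 : 0 ≤ α)
    (hg : ∀ t : ℕ, μ {ω | t < X ω} = ENNReal.ofReal (α ^ t)) (f : ℕ → ℝ≥0∞) :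
    ∫⁻ ω, f (X ω) ∂μ = ∑' k : ℕ, f (k + 1) * ENNReal.ofReal (α ^ k * (1 - α)) := by
  have hmap : ∀ n : ℕ, (μ.map X) {n} = μ {ω | X ω = n} := by
    intro n
    rw [Measure.map_apply hX (measurableSet_singleton n)]
    congr 1
  rw [← lintegral_map (f := f) Measurable.of_discrete hX, lintegral_countable' f,
    tsum_eq_zero_add' ENNReal.summable]
  simp only [hmap, geom_pmf_zero μ hX hg, mul_zero, zero_add]
  congr 1
  ext k
  rw [geom_pmf_succ μ hX hα0 hg k]

lemma geom_exp_integrable (hX : Measurable X) (hα0 : 0 < α) (hα1 : α < 1)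
    (hg : ∀ t : ℕ, μ {ω | t < X ω} = ENNReal.ofReal (α ^ t)) {τ : ℝ}
    (hτ : α * Real.exp τ < 1) :
    Integrable (fun ω => Real.exp (τ * (X ω : ℝ))) μ ∧
      ∫ ω, Real.exp (τ * (X ω : ℝ)) ∂μ = (1 - α) * Real.exp τ / (1 - α * Real.exp τ) := by
  have hr0 : (0:ℝ) ≤ α * Real.exp τ := by positivity
  have h1 : (0:ℝ) < 1 - α * Real.exp τ := by linarith
  have hmeas : Measurable (fun ω => Real.exp (τ * (X ω : ℝ))) := by
    exact (((Measurable.of_discrete (f := (Nat.cast : ℕ → ℝ))).comp hX).const_mul τ).exp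
  have hterm : ∀ k : ℕ, Real.exp (τ * ((k:ℝ) + 1)) * (α ^ k * (1 - α)) =
      ((1 - α) * Real.exp τ) * (α * Real.exp τ) ^ k := by
    intro k
    rw [mul_add, Real.exp_add, mul_one, mul_comm τ (k:ℝ), Real.exp_nat_mul, mul_pow]
    ring
  have hsumm : Summable (fun k : ℕ => ((1 - α) * Real.exp τ) * (α * Real.exp τ) ^ k) :=
    (summable_geometric_of_lt_one hr0 hτ).mul_left _
  have htsum : ∑' k : ℕ, ((1 - α) * Real.exp τ) * (α * Real.exp τ) ^ k =
      (1 - α) * Real.exp τ / (1 - α * Real.exp τ) := by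
    rw [tsum_mul_left, tsum_geometric_of_lt_one hr0 hτ, div_eq_mul_inv]
  have hlint : ∫⁻ ω, ENNReal.ofReal (Real.exp (τ * ((X ω : ℕ) : ℝ))) ∂μ =
      ENNReal.ofReal ((1 - α) * Real.exp τ / (1 - α * Real.exp τ)) := by
    rw [geom_lintegral μ hX hα0.le hg (fun n => ENNReal.ofReal (Real.exp (τ * (n : ℝ))))]
    have heq : ∀ k : ℕ, ENNReal.ofReal (Real.exp (τ * ((k + 1 : ℕ) : ℝ))) *
        ENNReal.ofReal (α ^ k * (1 - α)) =
        ENNReal.ofReal (((1 - α) * Real.exp τ) * (α * Real.exp τ) ^ k) := by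
      intro k
      rw [← ENNReal.ofReal_mul (Real.exp_nonneg _)]
      congr 1
      push_cast
      exact hterm k
    rw [tsum_congr heq, ← ENNReal.ofReal_tsum_of_nonneg
      (fun k => mul_nonneg (mul_nonneg (by linarith) (Real.exp_nonneg _)) (pow_nonneg hr0 k)) hsumm, htsum]
  have hint : Integrable (fun ω => Real.exp (τ * (X ω : ℝ))) μ := by
    refine ⟨hmeas.aestronglyMeasurable, ?_⟩
    rw [hasFiniteIntegral_iff_ofReal (ae_of_all _ fun ω => (Real.exp_pos _).le), hlint]
    exact ENNReal.ofReal_lt_top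
  refine ⟨hint, ?_⟩
  rw [integral_eq_lintegral_of_nonneg_ae (ae_of_all _ fun ω => (Real.exp_pos _).le)
    hmeas.aestronglyMeasurable, hlint, ENNReal.toReal_ofReal]
  have h2 : (0:ℝ) ≤ 1 - α := by linarith
  exact div_nonneg (by positivity) h1.le

lemma geom_mean (hX : Measurable X) (hα0 : 0 < α) (hα1 : α < 1)
    (hg : ∀ t : ℕ, μ {ω | t < X ω} = ENNReal.ofReal (α ^ t)) :
    Integrable (fun ω => (X ω : ℝ)) μ ∧ ∫ ω, (X ω : ℝ) ∂μ = 1 / (1 - α) := by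
  have h1α : (0:ℝ) < 1 - α := by linarith
  have hmeas : Measurable (fun ω => (X ω : ℝ)) :=
    (Measurable.of_discrete (f := (Nat.cast : ℕ → ℝ))).comp hX
  have hnorm : ‖α‖ < 1 := by rw [Real.norm_eq_abs, abs_of_pos hα0]; exact hα1
  have hks := hasSum_coe_mul_geometric_of_norm_lt_one (𝕜 := ℝ) hnorm
  have hgs := hasSum_geometric_of_lt_one hα0.le hα1
  have hgsum : HasSum (fun k : ℕ => ((k:ℝ) + 1) * (α ^ k * (1 - α))) (1 / (1 - α)) := by
    have h3 := (hks.add hgs).mul_left (1 - α)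
    have he : (fun k : ℕ => ((k:ℝ) + 1) * (α ^ k * (1 - α)))
        = fun i : ℕ => (1 - α) * ((i:ℝ) * α ^ i + α ^ i) := by
      funext k; ring
    have hv : (1 - α) * (α / (1 - α) ^ 2 + (1 - α)⁻¹) = 1 / (1 - α) := by
      have hne : (1:ℝ) - α ≠ 0 := ne_of_gt h1α
      field_simp
      ring_nf
    rw [hv] at h3
    rw [he]
    exact h3
  have hlint : ∫⁻ ω, ENNReal.ofReal ((X ω : ℝ)) ∂μ = ENNReal.ofReal (1 / (1 - α)) := by
    rw [geom_lintegral μ hX hα0.le hg (fun n => ENNReal.ofReal (n : ℝ))]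
    have heq : ∀ k : ℕ, ENNReal.ofReal ((k + 1 : ℕ) : ℝ) * ENNReal.ofReal (α ^ k * (1 - α)) =
        ENNReal.ofReal (((k:ℝ) + 1) * (α ^ k * (1 - α))) := by
      intro k
      rw [← ENNReal.ofReal_mul (by positivity)]
      congr 1
      push_cast
      ring
    rw [tsum_congr heq, ← ENNReal.ofReal_tsum_of_nonneg (fun k => by positivity) hgsum.summable,
      hgsum.tsum_eq]
  have hint : Integrable (fun ω => (X ω : ℝ)) μ := by
    refine ⟨hmeas.aestronglyMeasurable, ?_⟩
    rw [hasFiniteIntegral_iff_ofReal (ae_of_all _ fun ω => Nat.cast_nonneg _), hlint]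
    exact ENNReal.ofReal_lt_top
  refine ⟨hint, ?_⟩
  rw [integral_eq_lintegral_of_nonneg_ae (ae_of_all _ fun ω => Nat.cast_nonneg _)
    hmeas.aestronglyMeasurable, hlint, ENNReal.toReal_ofReal (by positivity)]

end Geom
/-- Query-cost of SampleNode: if the numbers of loop iterations `N i` of `m` independent
calls are i.i.d. geometric with termination probability `1-α` (so `Pr[N i > t] = α^t`),
and the `i`-th call issues `Q i ≤ 2·N i - 1` queries, then each call performs in
expectation fewer than `2/(1-α)` queries, and the probability that the `m` calls jointly
perform more than `2(1+Δ)m/(1-α)` queries is less than `exp(-(m/2)·Δ²/(1+Δ))`. -/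
theorem stmt_11 {Ω : Type*} [MeasurableSpace Ω] (μ : Measure Ω) [IsProbabilityMeasure μ]
    (α : ℝ) (hα : α ∈ Set.Ioo (0:ℝ) 1) (m : ℕ) (hm : 0 < m)
    (N Q : Fin m → Ω → ℕ)
    (hNmeas : ∀ i, Measurable (N i))
    (hindep : iIndepFun N μ)
    (hgeom : ∀ i (t : ℕ), μ {ω | t < N i ω} = ENNReal.ofReal (α ^ t))
    (hQ : ∀ i ω, (Q i ω : ℝ) ≤ 2 * (N i ω : ℝ) - 1) :
    (∀ i, ∫ ω, (Q i ω : ℝ) ∂μ < 2 / (1 - α)) ∧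
    (∀ Δ : ℝ, 0 < Δ →
      (μ {ω | 2 * (1 + Δ) * (m : ℝ) / (1 - α) < ∑ i, (Q i ω : ℝ)}).toReal <
        Real.exp (-((m : ℝ) / 2) * (Δ ^ 2 / (1 + Δ)))) := by
  obtain ⟨hα0, hα1⟩ := hα
  have hp : (0:ℝ) < 1 - α := by linarith
  constructor
  · intro i
    obtain ⟨hNint, hNval⟩ := geom_mean μ (hNmeas i) hα0 hα1 (hgeom i)
    have hint2 : Integrable (fun ω => 2 * (N i ω : ℝ) - 1) μ :=
      (hNint.const_mul 2).sub (integrable_const 1)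
    have hle : ∫ ω, (Q i ω : ℝ) ∂μ ≤ ∫ ω, (2 * (N i ω : ℝ) - 1) ∂μ :=
      integral_mono_of_nonneg (ae_of_all _ fun ω => Nat.cast_nonneg _) hint2
        (ae_of_all _ fun ω => hQ i ω)
    have hval : ∫ ω, (2 * (N i ω : ℝ) - 1) ∂μ = 2 * (1/(1-α)) - 1 := by
      rw [integral_sub (hNint.const_mul 2) (integrable_const 1), integral_const_mul, hNval,
        integral_const]
      simp
    rw [hval] at hle
    rw [mul_one_div] at hle
    have h2 : 2/(1-α) - 1 < 2/(1-α) := by linarith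
    linarith
  · intro Δ hΔ
    have hm' : (0:ℝ) < m := by exact_mod_cast hm
    have hD1 : (0:ℝ) < 1 + Δ := by linarith
    have hDp : (0:ℝ) < 1 + Δ - (1-α) := by linarith
    set R := (1 + Δ - (1-α)) / ((1 - (1-α)) * (1+Δ)) with hR
    have hsimp : (1 : ℝ) - (1-α) = α := by ring
    have hR1 : 1 < R := by
      rw [hR, lt_div_iff₀ (by rw [hsimp]; positivity)]
      nlinarith
    set τ := Real.log R with hτdef
    have hτpos : 0 < τ := Real.log_pos hR1
    have hexp : Real.exp τ = R := Real.exp_log (by linarith)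
    have hαR : α * R = (1 + Δ - (1-α))/(1+Δ) := by
      rw [hR, hsimp]
      field_simp
    have hαR1 : α * Real.exp τ < 1 := by
      rw [hexp, hαR, div_lt_one hD1]; linarith
    have hτint := fun i => geom_exp_integrable μ (hNmeas i) hα0 hα1 (hgeom i) hαR1
    have hXmeas : ∀ i : Fin m, Measurable (fun ω => (N i ω : ℝ)) := fun i =>
      (Measurable.of_discrete (f := (Nat.cast : ℕ → ℝ))).comp (hNmeas i)
    have hindepR : iIndepFun (fun i => fun ω => (N i ω : ℝ)) μ :=
      hindep.comp (fun _ => (Nat.cast : ℕ → ℝ)) (fun _ => Measurable.of_discrete)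
    set S := fun ω => ∑ i, (N i ω : ℝ) with hS
    have hSeq : S = ∑ i, (fun ω => (N i ω : ℝ)) := by
      funext ω
      rw [hS, Finset.sum_apply]
    set ε := (1+Δ) * m / (1-α) + m/2 with hε
    have hintS : Integrable (fun ω => Real.exp (τ * S ω)) μ := by
      rw [hSeq]
      exact hindepR.integrable_exp_mul_sum hXmeas (fun i _ => (hτint i).1)
    have hch := measure_ge_le_exp_mul_mgf (X := S) (t := τ) ε hτpos.le hintS
    have hMval : (1-α) * Real.exp τ / (1 - α * Real.exp τ) = (1+Δ) * R := by
      have h1 : 1 - α * Real.exp τ = (1-α)/(1+Δ) := by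
        rw [hexp, hαR]
        field_simp
        ring
      rw [h1, hexp]
      field_simp
    have hmgf : mgf S μ τ = ((1+Δ) * R) ^ m := by
      rw [hSeq, hindepR.mgf_sum hXmeas]
      have : ∀ i : Fin m, mgf (fun ω => (N i ω : ℝ)) μ τ = (1+Δ) * R := by
        intro i
        rw [mgf, ← hMval]
        exact (hτint i).2
      rw [Finset.prod_congr rfl (fun i _ => this i), Finset.prod_const, Finset.card_univ,
        Fintype.card_fin]
    have hsub : {ω | 2 * (1 + Δ) * (m : ℝ) / (1 - α) < ∑ i, (Q i ω : ℝ)} ⊆ {ω | ε ≤ S ω} := by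
      intro ω hω
      simp only [Set.mem_setOf_eq] at hω ⊢
      have h1 : (∑ i, (Q i ω : ℝ)) ≤ ∑ i, (2 * (N i ω : ℝ) - 1) :=
        Finset.sum_le_sum (fun i _ => hQ i ω)
      have h2 : ∑ i, (2 * (N i ω : ℝ) - 1) = 2 * S ω - m := by
        rw [Finset.sum_sub_distrib, Finset.sum_const, ← Finset.mul_sum, hS]
        simp
      have h3 : 2 * (1 + Δ) * (m:ℝ) / (1 - α) = 2 * ((1+Δ) * m / (1-α)) := by ring
      rw [hε]
      linarith
    have hmono := ENNReal.toReal_mono (measure_ne_top μ _) (measure_mono hsub)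
    have hMpos : (0:ℝ) < (1+Δ) * R := by positivity
    have hpow : ((1+Δ) * R) ^ m = Real.exp (m * Real.log ((1+Δ)*R)) := by
      rw [← Real.log_pow, Real.exp_log (pow_pos hMpos m)]
    have hlogM : Real.log ((1+Δ)*R) = Real.log (1+Δ) + τ := by
      rw [Real.log_mul (by linarith) (by linarith), hτdef]
    have hk := key' hp (by linarith : (1:ℝ)-α < 1) hΔ
    -- hk : Δ²/(2(1+Δ)) ≤ log((1+Δ-(1-α))/((1-(1-α))*(1+Δ))) * ((1+Δ-(1-α))/(1-α)) - log(1+Δ)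
    rw [← hR, ← hτdef] at hk
    set c := (1+Δ-(1-α))/(1-α) with hc
    have hc1 : (1+Δ)/(1-α) = c + 1 := by
      rw [hc]
      field_simp
      ring
    have hexpineq : -τ*ε + m*(Real.log (1+Δ) + τ) < -((m:ℝ)/2)*(Δ^2/(1+Δ)) := by
      have hεc : ε = m*(c+1) + m/2 := by
        rw [hε, ← hc1]
        ring
      have h5 : -τ*ε + m*(Real.log (1+Δ) + τ) = m*(-(τ*c) - τ/2 + Real.log (1+Δ)) := by
        rw [hεc]; ring
      have h6 : -(τ*c) - τ/2 + Real.log (1+Δ) < -(Δ^2/(2*(1+Δ))) := by linarith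
      have h7 := mul_lt_mul_of_pos_left h6 hm'
      have h8 : (m:ℝ)*(-(Δ^2/(2*(1+Δ)))) = -((m:ℝ)/2)*(Δ^2/(1+Δ)) := by
        have hne : (1+Δ) ≠ 0 := by positivity
        field_simp
      rw [h5]
      linarith
    calc (μ {ω | 2 * (1 + Δ) * (m : ℝ) / (1 - α) < ∑ i, (Q i ω : ℝ)}).toReal
        ≤ (μ {ω | ε ≤ S ω}).toReal := hmono
      _ ≤ Real.exp (-τ * ε) * mgf S μ τ := hch
      _ = Real.exp (-τ * ε + m * (Real.log (1+Δ) + τ)) := by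
          rw [hmgf, hpow, hlogM, ← Real.exp_add]
      _ < Real.exp (-((m : ℝ) / 2) * (Δ ^ 2 / (1 + Δ))) := Real.exp_lt_exp.mpr hexpineq
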